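/- Let F be a field of characteristic 0 and s(y) = y² + a₃y³ + a₄y⁴ + ⋯ ∈ F[[y]]. Then the formal differential equation y²·ψ'(y) = s(ψ(y)) has a solution ψ ∈ F[[y]] of the form ψ(y) = y + c₂y² + ⋯ if and only if a₃ = 0. -/

import Mathlib

open PowerSeries

/-- Formal composition `f(ψ)` of power series, defined coefficientwise (this is the usual
substitution when `ψ` has zero constant term). -/
noncomputable def PowerSeries.compose {F : Type*} [CommRing F]
    (f ψ : PowerSeries F) : PowerSeries F :=
  PowerSeries.mk fun n => PowerSeries.coeff n (Polynomial.aeval ψ (f.trunc (n + 1)))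

section Helpers

variable {F : Type*} [CommRing F]

private lemma aeval_trunc' (s ψ : PowerSeries F) (N : ℕ) :
    Polynomial.aeval ψ (s.trunc N) = ∑ k ∈ Finset.range N, PowerSeries.C (coeff k s) * ψ ^ k := by
  rw [PowerSeries.trunc_apply, map_sum, Finset.range_eq_Ico]
  simp [Polynomial.aeval_monomial, PowerSeries.algebraMap_apply]

private lemma coeff_pow_zero' (ψ : PowerSeries F) (h : constantCoeff ψ = 0)
    {m k : ℕ} (hmk : m < k) : coeff m (ψ ^ k) = 0 :=
  X_pow_dvd_iff.1 (pow_dvd_pow_of_dvd (X_dvd_iff.2 h) k) m hmk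

private lemma coeff_compose' (s ψ : PowerSeries F) (h : constantCoeff ψ = 0)
    (m N : ℕ) (hN : m < N) :
    coeff m (PowerSeries.compose s ψ)
      = ∑ k ∈ Finset.range N, coeff k s * coeff m (ψ ^ k) := by
  rw [PowerSeries.compose, coeff_mk, aeval_trunc', map_sum]
  have h1 : ∀ k ∈ Finset.range (m+1), coeff m (C (coeff k s) * ψ ^ k)
      = coeff k s * coeff m (ψ ^ k) := by
    intro k _; rw [coeff_C_mul]
  rw [Finset.sum_congr rfl h1]
  apply Finset.sum_subset (Finset.range_subset_range.2 hN)
  intro k _ hk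
  rw [coeff_pow_zero' ψ h (by simpa using hk), mul_zero]

private lemma coeff_zero_mul' (f g : PowerSeries F) :
    coeff 0 (f * g) = coeff 0 f * coeff 0 g := by
  simp [coeff_zero_eq_constantCoeff, map_mul]

private lemma coeff_one_mul' (f g : PowerSeries F) :
    coeff 1 (f * g) = coeff 0 f * coeff 1 g + coeff 1 f * coeff 0 g := by
  rw [coeff_mul, Finset.Nat.sum_antidiagonal_eq_sum_range_succ_mk]
  simp [Finset.sum_range_succ]

private lemma coeff_two_mul' (f g : PowerSeries F) :
    coeff 2 (f * g) = coeff 0 f * coeff 2 g + coeff 1 f * coeff 1 g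
      + coeff 2 f * coeff 0 g := by
  rw [coeff_mul, Finset.Nat.sum_antidiagonal_eq_sum_range_succ_mk]
  rw [Finset.sum_range_succ, Finset.sum_range_succ, Finset.sum_range_succ,
      Finset.range_zero, Finset.sum_empty]
  norm_num

private lemma coeff_three_mul' (f g : PowerSeries F) :
    coeff 3 (f * g) = coeff 0 f * coeff 3 g + coeff 1 f * coeff 2 g
      + coeff 2 f * coeff 1 g + coeff 3 f * coeff 0 g := by
  rw [coeff_mul, Finset.Nat.sum_antidiagonal_eq_sum_range_succ_mk]
  rw [Finset.sum_range_succ, Finset.sum_range_succ, Finset.sum_range_succ,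
      Finset.sum_range_succ, Finset.range_zero, Finset.sum_empty]
  norm_num

private lemma compose_diff' (s ψ ψ' : PowerSeries F)
    (hs1 : coeff 1 s = 0)
    (hψ : constantCoeff ψ = 0) (hψ' : constantCoeff ψ' = 0)
    (m : ℕ) (hm : 2 ≤ m) (hagree : ∀ k < m, coeff k ψ = coeff k ψ') :
    coeff (m+1) (PowerSeries.compose s ψ)
      = coeff (m+1) (PowerSeries.compose s ψ')
        + coeff 2 s * ((coeff 1 ψ + coeff 1 ψ') * (coeff m ψ - coeff m ψ')) := by
  have hdvd : (X : PowerSeries F) ^ m ∣ ψ - ψ' := by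
    rw [X_pow_dvd_iff]
    intro k hk
    rw [map_sub, hagree k hk, sub_self]
  obtain ⟨g, hg⟩ := hdvd
  have hg0 : coeff m ψ - coeff m ψ' = coeff 0 g := by
    rw [← map_sub, hg]
    simpa using coeff_X_pow_mul g m 0
  rw [coeff_compose' s ψ hψ (m+1) (m+2) (by omega),
      coeff_compose' s ψ' hψ' (m+1) (m+2) (by omega)]
  have key : ∀ k ∈ Finset.range (m+2), coeff k s * coeff (m+1) (ψ^k)
      = coeff k s * coeff (m+1) (ψ'^k)
        + (if k = 2 then coeff 2 s * ((coeff 1 ψ + coeff 1 ψ')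
            * (coeff m ψ - coeff m ψ')) else 0) := by
    intro k _
    match k with
    | 0 => simp
    | 1 => simp [hs1]
    | 2 =>
      rw [if_pos rfl]
      have h2 : ψ^2 = ψ'^2 + (ψ + ψ') * (ψ - ψ') := by ring
      rw [h2, map_add, mul_add]
      congr 1
      rw [hg, ← mul_assoc, mul_comm (ψ + ψ'), mul_assoc,
          show m + 1 = 1 + m by ring, coeff_X_pow_mul, coeff_one_mul']
      simp only [map_add, coeff_zero_eq_constantCoeff, hψ, hψ', ← hg0]
      ring
    | (j+3) =>
      have hz : coeff (m+1) (ψ^(j+3)) - coeff (m+1) (ψ'^(j+3)) = 0 := by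
        rw [← map_sub, ← geom_sum₂_mul ψ ψ' (j+3)]
        have hgeom : (X : PowerSeries F) ^ 2 ∣ ∑ i ∈ Finset.range (j+3), ψ^i * ψ'^(j+3-1-i) := by
          apply Finset.dvd_sum
          intro i hi
          have hi' : i < j + 3 := Finset.mem_range.1 hi
          calc (X : PowerSeries F) ^ 2 ∣ X ^ (j+2) := pow_dvd_pow X (by omega)
            _ = X ^ i * X ^ (j+3-1-i) := by rw [← pow_add]; congr 1; omega
            _ ∣ ψ^i * ψ'^(j+3-1-i) :=
                mul_dvd_mul (pow_dvd_pow_of_dvd (X_dvd_iff.2 hψ) i)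
                  (pow_dvd_pow_of_dvd (X_dvd_iff.2 hψ') _)
        have hdd : (X : PowerSeries F) ^ (2+m) ∣
            (∑ i ∈ Finset.range (j+3), ψ^i * ψ'^(j+3-1-i)) * (ψ - ψ') := by
          rw [pow_add]
          exact mul_dvd_mul hgeom ⟨g, hg⟩
        rw [X_pow_dvd_iff] at hdd
        exact hdd (m+1) (by omega)
      rw [if_neg (by omega), add_zero, sub_eq_zero.1 hz]
  rw [Finset.sum_congr rfl key, Finset.sum_add_distrib,
      Finset.sum_ite_eq' (Finset.range (m+2)) 2,
      if_pos (Finset.mem_range.2 (by omega))]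

private lemma coeff_derivativeFun' (f : PowerSeries F) (n : ℕ) :
    coeff n f.derivativeFun = coeff (n + 1) f * (n + 1) :=
  coeff_derivative f n

end Helpers

/-- The recursively defined coefficients of the solution. -/
noncomputable def solCoeff {F : Type*} [Field F] (s : PowerSeries F) (n : ℕ) : F :=
  if n = 1 then 1
  else if 3 ≤ n then
    (coeff (n+1) (PowerSeries.compose s
      (PowerSeries.mk fun k => if h : k < n then solCoeff s k else 0))) / ((n:F) - 2)
  else 0
decreasing_by exact h

section SolFacts

variable {F : Type*} [Field F] (s : PowerSeries F)

lemma solCoeff_zero : solCoeff s 0 = 0 := by rw [solCoeff]; norm_num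
lemma solCoeff_one : solCoeff s 1 = 1 := by rw [solCoeff]; norm_num
lemma solCoeff_two : solCoeff s 2 = 0 := by rw [solCoeff]; norm_num

lemma solCoeff_spec [CharZero F] (n : ℕ) (h3 : 3 ≤ n) :
    solCoeff s n * ((n:F) - 2)
      = coeff (n+1) (PowerSeries.compose s
          (PowerSeries.mk fun k => if h : k < n then solCoeff s k else 0)) := by
  have hne : ((n:F) - 2) ≠ 0 := by
    intro h
    have h2 : (n:F) = ((2:ℕ):F) := by push_cast; linear_combination h
    have := Nat.cast_injective (R := F) h2
    omega
  rw [solCoeff]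
  rw [if_neg (by omega), if_pos h3, div_mul_cancel₀ _ hne]

end SolFacts

/-- Let `F` be a field of characteristic `0` and
`s(y) = y² + a₃y³ + a₄y⁴ + ⋯ ∈ F[[y]]`.  Then the formal differential equation
`y²·ψ'(y) = s(ψ(y))` has a solution `ψ ∈ F[[y]]` of the form `ψ(y) = y + c₂y² + ⋯`
if and only if `a₃ = 0`. -/
theorem formal_ode_order_two_solvable_iff
    (F : Type*) [Field F] [CharZero F] (s : PowerSeries F)
    (hs0 : PowerSeries.constantCoeff s = 0)
    (hs1 : PowerSeries.coeff 1 s = 0)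
    (hs2 : PowerSeries.coeff 2 s = 1) :
    (∃ ψ : PowerSeries F,
      PowerSeries.constantCoeff ψ = 0 ∧
      PowerSeries.coeff 1 ψ = 1 ∧
      PowerSeries.X ^ 2 * ψ.derivativeFun = PowerSeries.compose s ψ) ↔
    PowerSeries.coeff 3 s = 0 := by
  have hs0' : coeff 0 s = 0 := by rw [coeff_zero_eq_constantCoeff]; exact hs0
  constructor
  · rintro ⟨ψ, h0, h1, heq⟩
    have h0' : coeff 0 ψ = 0 := by rw [coeff_zero_eq_constantCoeff]; exact h0
    have hL : coeff 3 (X ^ 2 * ψ.derivativeFun) = coeff 2 ψ * 2 := by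
      rw [show (3:ℕ) = 1 + 2 from rfl, coeff_X_pow_mul, coeff_derivativeFun']
      norm_num
    have h2sq : coeff 3 (ψ^2) = 2 * (coeff 2 ψ) := by
      rw [pow_two, coeff_three_mul', h0', h1]; ring
    have h3cube : coeff 3 (ψ^3) = 1 := by
      rw [show (3:ℕ) = 2 + 1 from rfl, pow_succ, pow_two, coeff_three_mul', coeff_two_mul',
          coeff_one_mul', coeff_zero_mul', h0', h1]
      ring
    have hR : coeff 3 (PowerSeries.compose s ψ)
        = 2 * coeff 2 ψ + coeff 3 s := by
      rw [coeff_compose' s ψ h0 3 4 (by norm_num)]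
      rw [Finset.sum_range_succ, Finset.sum_range_succ, Finset.sum_range_succ,
          Finset.sum_range_succ, Finset.range_zero, Finset.sum_empty]
      rw [hs0', hs1, hs2, h2sq, h3cube]
      ring
    have hkey := congrArg (coeff (R := F) 3) heq
    rw [hL, hR] at hkey
    linear_combination -hkey
  · intro ha3
    set c : ℕ → F := solCoeff s with hc
    set ψ : PowerSeries F := PowerSeries.mk c with hψdef
    have hco : ∀ n, coeff n ψ = c n := fun n => coeff_mk n c
    have h0 : constantCoeff ψ = 0 := by
      rw [← coeff_zero_eq_constantCoeff, hco, hc, solCoeff_zero]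
    have h0' : coeff 0 ψ = 0 := by rw [coeff_zero_eq_constantCoeff]; exact h0
    have h1 : coeff 1 ψ = 1 := by rw [hco, hc, solCoeff_one]
    have h2 : coeff 2 ψ = 0 := by rw [hco, hc, solCoeff_two]
    refine ⟨ψ, h0, h1, ?_⟩
    ext m
    match m with
    | 0 =>
      rw [coeff_compose' s ψ h0 0 1 (by norm_num)]
      simp [hs0']
    | 1 =>
      rw [coeff_compose' s ψ h0 1 2 (by norm_num)]
      rw [Finset.sum_range_succ, Finset.sum_range_succ, Finset.range_zero, Finset.sum_empty]
      have hh : coeff 1 (X ^ 2 * ψ.derivativeFun) = 0 := by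
        rw [coeff_X_pow_mul' ψ.derivativeFun 2 1]
        norm_num
      rw [hh, hs0', hs1]
      simp
    | 2 =>
      have hL : coeff 2 (X ^ 2 * ψ.derivativeFun) = 1 := by
        rw [coeff_X_pow_mul' ψ.derivativeFun 2 2, if_pos (le_refl 2),
            (show 2 - 2 = 0 by omega), coeff_derivativeFun', h1]
        norm_num
      rw [hL, coeff_compose' s ψ h0 2 3 (by norm_num)]
      rw [Finset.sum_range_succ, Finset.sum_range_succ, Finset.sum_range_succ,
          Finset.range_zero, Finset.sum_empty]
      have hsq : coeff 2 (ψ^2) = 1 := by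
        rw [pow_two, coeff_two_mul', h0', h1]; ring
      rw [hs0', hs1, hs2, hsq]
      simp
    | 3 =>
      have hL : coeff 3 (X ^ 2 * ψ.derivativeFun) = 0 := by
        rw [coeff_X_pow_mul' ψ.derivativeFun 2 3, if_pos (by omega : 2 ≤ 3),
            (show 3 - 2 = 1 by omega), coeff_derivativeFun', h2]
        norm_num
      rw [hL, coeff_compose' s ψ h0 3 4 (by norm_num)]
      rw [Finset.sum_range_succ, Finset.sum_range_succ, Finset.sum_range_succ,
          Finset.sum_range_succ, Finset.range_zero, Finset.sum_empty]
      have h2sq : coeff 3 (ψ^2) = 0 := by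
        rw [pow_two, coeff_three_mul', h0', h1, h2]; ring
      have h3cube : coeff 3 (ψ^3) = 1 := by
        rw [show (3:ℕ) = 2 + 1 from rfl, pow_succ, pow_two, coeff_three_mul', coeff_two_mul',
            coeff_one_mul', coeff_zero_mul', h0', h1]
        ring
      rw [hs0', hs1, hs2, ha3, h2sq, h3cube]
      ring
    | (n+4) =>
      set ψ' : PowerSeries F := PowerSeries.mk fun k => if h : k < n+3 then c k else 0 with hψ'
      have hψ'0 : constantCoeff ψ' = 0 := by
        rw [← coeff_zero_eq_constantCoeff, hψ', coeff_mk, dif_pos (by omega : 0 < n+3),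
            hc, solCoeff_zero]
      have hψ'1 : coeff 1 ψ' = 1 := by
        rw [hψ', coeff_mk, dif_pos (by omega : 1 < n+3), hc, solCoeff_one]
      have hψ'top : coeff (n+3) ψ' = 0 := by
        rw [hψ', coeff_mk, dif_neg (by omega)]
      have hagree : ∀ k < n+3, coeff k ψ = coeff k ψ' := by
        intro k hk
        rw [hco, hψ', coeff_mk, dif_pos hk]
      have hdiff := compose_diff' s ψ ψ' hs1 h0 hψ'0 (n+3) (by omega) hagree
      have hspec := solCoeff_spec s (n+3) (by omega)
      rw [← hc, ← hψ'] at hspec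
      have h34 : n + 3 + 1 = n + 4 := by omega
      rw [h34] at hdiff hspec
      have hL : coeff (n+4) (X ^ 2 * ψ.derivativeFun) = c (n+3) * ((n:F)+3) := by
        rw [coeff_X_pow_mul' ψ.derivativeFun 2 (n+4), if_pos (by omega : 2 ≤ n+4),
            (show n+4-2 = n+2 by omega), coeff_derivativeFun', hco]
        push_cast; ring
      rw [hL, hdiff, hψ'1, h1, hs2, hco, hψ'top, ← hspec]
      push_cast; ring
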